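/- Fix an integer d ≥ 2, an index 0 ≤ i ≤ d, a threshold u ∈ ℝ, and κ as below with κ'(1) = 1. Then, as L → ∞, L^{−d/2}·N_i(L,u) converges to η_1^{−d/2}·A_i·(1 − Φ(u)), where A_i := (2√π / Γ((d+1)/2)) · ∫_{ℝ^d} Π(λ)·𝟙_{O_i}(λ)·f_{1/2}(λ) dλ. (Sparse regime of Theorem 3.3.) -/

import Mathlib

open MeasureTheory Filter Real


section calc1
variable {κ : ℝ → ℝ}

lemma contDiff_iter (hsmooth : ContDiff ℝ 2 κ) (L : ℕ) : ContDiff ℝ 2 (κ^[L]) := by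
  induction L with
  | zero => simpa using contDiff_id
  | succ n ih => rw [Function.iterate_succ'] ; exact hsmooth.comp ih

lemma diff_kappa (hsmooth : ContDiff ℝ 2 κ) : Differentiable ℝ κ :=
  hsmooth.differentiable (by norm_num)

lemma diff_deriv_of_c2 {f : ℝ → ℝ} (hf : ContDiff ℝ 2 f) : Differentiable ℝ (deriv f) := by
  have h2 : ContDiff ℝ ((1 : ℕ∞) + 1) f := by exact_mod_cast hf
  have h := (contDiff_succ_iff_deriv (n := 1)).mp (by exact_mod_cast h2)
  exact h.2.2.differentiable (by norm_num)

lemma iter_fix (hfix : κ 1 = 1) (L : ℕ) : (κ^[L]) 1 = 1 := by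
  induction L with
  | zero => simp
  | succ n ih => rw [Function.iterate_succ_apply', ih, hfix]

lemma iter_d1 (hsmooth : ContDiff ℝ 2 κ) (hfix : κ 1 = 1) (hsparse : deriv κ 1 = 1)
    (L : ℕ) : deriv (κ^[L]) 1 = 1 := by
  induction L with
  | zero => simp
  | succ n ih =>
    rw [Function.iterate_succ']
    rw [deriv_comp _ (diff_kappa hsmooth _) ((contDiff_iter hsmooth n).differentiable (by norm_num) _),
      iter_fix hfix, hsparse, ih, mul_one]

lemma iter_deriv_eq (hsmooth : ContDiff ℝ 2 κ) (L : ℕ) :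
    deriv (κ^[L+1]) = fun x => deriv κ ((κ^[L]) x) * deriv (κ^[L]) x := by
  funext x
  rw [Function.iterate_succ']
  exact deriv_comp _ (diff_kappa hsmooth _) ((contDiff_iter hsmooth L).differentiable (by norm_num) _)

lemma iter_d2 (hsmooth : ContDiff ℝ 2 κ) (hfix : κ 1 = 1) (hsparse : deriv κ 1 = 1)
    (L : ℕ) : deriv (deriv (κ^[L])) 1 = L * deriv (deriv κ) 1 := by
  induction L with
  | zero =>
    simp only [Function.iterate_zero, deriv_id'']
    simp
  | succ n ih =>
    rw [iter_deriv_eq hsmooth n]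
    have hdk : Differentiable ℝ (κ^[n]) := (contDiff_iter hsmooth n).differentiable (by norm_num)
    have h1 : DifferentiableAt ℝ (fun x => deriv κ ((κ^[n]) x)) 1 :=
      DifferentiableAt.comp 1 (diff_deriv_of_c2 hsmooth ((κ^[n]) 1)) (hdk 1)
    have h2 : DifferentiableAt ℝ (deriv (κ^[n])) 1 :=
      diff_deriv_of_c2 (contDiff_iter hsmooth n) 1
    rw [deriv_fun_mul h1 h2, ih]
    have h3 : deriv (fun x => deriv κ ((κ^[n]) x)) 1
        = deriv (deriv κ) ((κ^[n]) 1) * deriv (κ^[n]) 1 :=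
      deriv_comp _ (diff_deriv_of_c2 hsmooth _) (hdk 1)
    rw [h3, iter_fix hfix, iter_d1 hsmooth hfix hsparse n, hsparse]
    push_cast
    ring
end calc1


/-- `K_d := 2^{d/2} ∏_{j=1}^d Γ(j/2)`. -/
noncomputable def Kd (d : ℕ) : ℝ :=
  2 ^ ((d : ℝ) / 2) * ∏ j ∈ Finset.Icc 1 d, Real.Gamma ((j : ℝ) / 2)

/-- `Π(λ) := ∏_{j=1}^d |λ_j|`. -/
noncomputable def PiAbs (d : ℕ) (lam : Fin d → ℝ) : ℝ := ∏ j, |lam j|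

/-- `Δ(λ) := ∏_{1 ≤ h < k ≤ d} |λ_h − λ_k|`. -/
noncomputable def DeltaV (d : ℕ) (lam : Fin d → ℝ) : ℝ :=
  ∏ h : Fin d, ∏ k : Fin d, if h < k then |lam h - lam k| else 1

/-- The density of the ordered eigenvalues of a GOI(c) matrix. -/
noncomputable def fGOI (d : ℕ) (c : ℝ) (lam : Fin d → ℝ) : ℝ :=
  (Kd d * Real.sqrt (1 + d * c))⁻¹ * DeltaV d lam *
    Real.exp (-(∑ j, lam j ^ 2) / 2 + c * (∑ j, lam j) ^ 2 / (2 * (1 + d * c))) *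
    Set.indicator {x : Fin d → ℝ | Monotone x} (fun _ => 1) lam

/-- `O_i := {λ : λ_i < 0 < λ_{i+1}}` with conventions `λ_0 = −∞`, `λ_{d+1} = +∞`
(one-based indexing; coordinates here are zero-based). -/
def Oi (d i : ℕ) : Set (Fin d → ℝ) :=
  {lam | (∀ j : Fin d, (j : ℕ) + 1 = i → lam j < 0) ∧ (∀ j : Fin d, (j : ℕ) = i → 0 < lam j)}

/-- `∫_{ℝ^d} Π(λ)·𝟙_{O_i}(λ)·f_c(λ) dλ`. -/
noncomputable def GOIint (d i : ℕ) (c : ℝ) : ℝ :=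
  ∫ lam : Fin d → ℝ,
    PiAbs d lam * Set.indicator (Oi d i) (fun _ => 1) lam * fGOI d c lam

/-- `η_L := κ_L'(1)/κ_L''(1)` where `κ_L` is the `L`-fold iterate of `κ`. -/
noncomputable def etaL (κ : ℝ → ℝ) (L : ℕ) : ℝ :=
  deriv (κ^[L]) 1 / deriv (deriv (κ^[L])) 1

/-- The Kac–Rice expression for the expected number of critical points of index `i`
of the depth-`L` limiting field on `S^d`. -/
noncomputable def Mcrit (d i : ℕ) (κ : ℝ → ℝ) (L : ℕ) : ℝ :=
  2 * Real.sqrt π / Real.Gamma (((d : ℝ) + 1) / 2) * etaL κ L ^ (-(d : ℝ) / 2) *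
    GOIint d i ((1 + etaL κ L) / 2)

/-- `ξ_L := κ_L'(1)²/κ_L''(1)`. -/
noncomputable def xiL (κ : ℝ → ℝ) (L : ℕ) : ℝ :=
  deriv (κ^[L]) 1 ^ 2 / deriv (deriv (κ^[L])) 1

/-- The standard Gaussian density. -/
noncomputable def stdPhi (x : ℝ) : ℝ := Real.exp (-x ^ 2 / 2) / Real.sqrt (2 * π)

/-- The standard Gaussian cumulative distribution function. -/
noncomputable def stdCDF (u : ℝ) : ℝ := ∫ x in Set.Iic u, stdPhi x

/-- `∫_u^∞ φ(x)·(∫_{ℝ^d} Π(λ_{ξ,x})·𝟙_{O_i}(λ_{ξ,x})·f_c(λ) dλ) dx`, where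
`λ_{ξ,x}` has components `λ_j − ξ·x/√2`. -/
noncomputable def GOIintShift (d i : ℕ) (c ξ u : ℝ) : ℝ :=
  ∫ x in Set.Ioi u, stdPhi x *
    ∫ lam : Fin d → ℝ,
      PiAbs d (fun j => lam j - ξ * x / Real.sqrt 2) *
        Set.indicator (Oi d i) (fun _ => 1) (fun j => lam j - ξ * x / Real.sqrt 2) *
        fGOI d c lam

/-- The Kac–Rice expression for the expected number of critical points of index `i`
above level `u` of the depth-`L` limiting field on `S^d`. -/
noncomputable def Ncrit (d i : ℕ) (κ : ℝ → ℝ) (u : ℝ) (L : ℕ) : ℝ :=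
  2 * Real.sqrt π / Real.Gamma (((d : ℝ) + 1) / 2) * etaL κ L ^ (-(d : ℝ) / 2) *
    GOIintShift d i ((1 + etaL κ L - xiL κ L) / 2) (xiL κ L) u



-- integrability of |x|^m * exp(-b x^2)
lemma intpow (m : ℕ) {b : ℝ} (hb : 0 < b) :
    Integrable (fun x : ℝ => |x| ^ m * Real.exp (-b * x ^ 2)) := by
  have hmeas : Measurable fun x : ℝ => |x| ^ m * Real.exp (-b * x ^ 2) := by
    fun_prop
  have hIoi : IntegrableOn (fun x : ℝ => |x| ^ m * Real.exp (-b * x ^ 2)) (Set.Ioi 0) := by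
    refine (integrableOn_rpow_mul_exp_neg_mul_sq hb (s := m)
      (lt_of_lt_of_le (by norm_num) (Nat.cast_nonneg m))).congr_fun ?_ measurableSet_Ioi
    intro x hx
    simp only [Real.rpow_natCast, abs_of_pos (Set.mem_Ioi.mp hx)]
  have hIio : IntegrableOn (fun x : ℝ => |x| ^ m * Real.exp (-b * x ^ 2)) (Set.Iio 0) := by
    rw [← (Measure.measurePreserving_neg (volume : Measure ℝ)).integrableOn_comp_preimage
        (Homeomorph.neg ℝ).measurableEmbedding]
    simpa [Function.comp_def] using hIoi
  rw [← integrableOn_univ, ← @Set.Iio_union_Ici _ _ (0 : ℝ), integrableOn_union,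
    integrableOn_Ici_iff_integrableOn_Ioi]
  exact ⟨hIio, hIoi⟩

-- (1+u)^m ≤ 2^m (1 + u^m) for u ≥ 0
lemma one_add_pow_le {u : ℝ} (hu : 0 ≤ u) (m : ℕ) : (1 + u) ^ m ≤ 2 ^ m * (1 + u ^ m) := by
  rcases le_total u 1 with h | h
  · calc (1 + u) ^ m ≤ 2 ^ m := by
          apply pow_le_pow_left₀ (by linarith) (by linarith)
        _ ≤ 2 ^ m * (1 + u ^ m) := by nlinarith [pow_nonneg hu m, pow_pos (by norm_num : (0:ℝ) < 2) m]
  · calc (1 + u) ^ m ≤ (2 * u) ^ m := by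
          apply pow_le_pow_left₀ (by linarith) (by linarith)
        _ = 2 ^ m * u ^ m := by rw [mul_pow]
        _ ≤ 2 ^ m * (1 + u ^ m) := by nlinarith [pow_pos (by norm_num : (0:ℝ) < 2) m]

-- integrability of (1 + B|x|)^m exp(-b x^2)
lemma intpolygauss (m : ℕ) {b B : ℝ} (hb : 0 < b) (hB : 0 ≤ B) :
    Integrable (fun x : ℝ => (1 + B * |x|) ^ m * Real.exp (-b * x ^ 2)) := by
  have h1 : Integrable (fun x : ℝ => ((1 + B) ^ m * 2 ^ m) *
      ((1 + |x| ^ m) * Real.exp (-b * x ^ 2))) := by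
    have := ((integrable_exp_neg_mul_sq hb).add (intpow m hb))
    refine (Integrable.const_mul ?_ _)
    simpa [add_mul, Pi.add_def] using this
  have hc : Continuous fun x : ℝ => (1 + B * |x|) ^ m * Real.exp (-b * x ^ 2) :=
    ((continuous_const.add (continuous_const.mul continuous_abs)).pow m).mul
      (Real.continuous_exp.comp (continuous_const.mul (continuous_pow 2)))
  refine h1.mono' hc.aestronglyMeasurable ?_
  filter_upwards with x
  have h2 : (0:ℝ) ≤ 1 + B * |x| := by positivity
  rw [Real.norm_eq_abs, abs_mul, abs_of_nonneg (by positivity : (0:ℝ) ≤ (1 + B * |x|) ^ m),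
    abs_of_nonneg (Real.exp_pos _).le]
  have h3 : (1 + B * |x|) ^ m ≤ (1 + B) ^ m * (2 ^ m * (1 + |x| ^ m)) := by
    calc (1 + B * |x|) ^ m ≤ ((1 + B) * (1 + |x|)) ^ m := by
          apply pow_le_pow_left₀ h2
          nlinarith [abs_nonneg x]
        _ = (1 + B) ^ m * (1 + |x|) ^ m := mul_pow _ _ _
        _ ≤ (1 + B) ^ m * (2 ^ m * (1 + |x| ^ m)) := by
          apply mul_le_mul_of_nonneg_left (one_add_pow_le (abs_nonneg x) m) (by positivity)
  calc (1 + B * |x|) ^ m * Real.exp (-b * x ^ 2)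
      ≤ ((1 + B) ^ m * (2 ^ m * (1 + |x| ^ m))) * Real.exp (-b * x ^ 2) :=
        mul_le_mul_of_nonneg_right h3 (Real.exp_pos _).le
    _ = ((1 + B) ^ m * 2 ^ m) * ((1 + |x| ^ m) * Real.exp (-b * x ^ 2)) := by ring

noncomputable def Gfun (d i : ℕ) (c s : ℝ) (lam : Fin d → ℝ) : ℝ :=
  PiAbs d (fun j => lam j - s) * Set.indicator (Oi d i) (fun _ => 1) (fun j => lam j - s) *
    fGOI d c lam

noncomputable def C0 (d : ℕ) : ℝ := (Kd d * Real.sqrt (1 + d * (1/2 : ℝ)))⁻¹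

noncomputable def wfun (d : ℕ) (t : ℝ) : ℝ :=
  (1 + |t|) ^ (2*d*d+1) * Real.exp (-((2 + (d:ℝ))⁻¹ * t ^ 2))

lemma wfun_int (d : ℕ) : Integrable (wfun d) := by
  have := intpolygauss (2*d*d+1) (b := (2 + (d:ℝ))⁻¹) (B := 1)
    (by positivity) (by norm_num)
  exact (by simpa [one_mul, neg_mul] using this :
    Integrable (fun x : ℝ => (1 + |x|) ^ (2*d*d+1) * Real.exp (-((2 + (d:ℝ))⁻¹ * x ^ 2))))

lemma wfun_nonneg (d : ℕ) (t : ℝ) : 0 ≤ wfun d t := by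
  unfold wfun; positivity

lemma Kd_nonneg (d : ℕ) : 0 ≤ Kd d := by
  unfold Kd
  apply mul_nonneg (Real.rpow_nonneg (by norm_num) _)
  apply Finset.prod_nonneg
  intro j hj
  have h1 : 1 ≤ j := (Finset.mem_Icc.mp hj).1
  exact (Real.Gamma_pos_of_pos (by positivity)).le

lemma C0_nonneg (d : ℕ) : 0 ≤ C0 d := by
  unfold C0
  exact inv_nonneg.mpr (mul_nonneg (Kd_nonneg d) (Real.sqrt_nonneg _))

lemma ind_nonneg {S : Set (Fin d → ℝ)} (v : Fin d → ℝ) :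
    0 ≤ Set.indicator S (fun _ => (1:ℝ)) v :=
  Set.indicator_nonneg (fun _ _ => zero_le_one) _

lemma ind_le_one {S : Set (Fin d → ℝ)} (v : Fin d → ℝ) :
    Set.indicator S (fun _ => (1:ℝ)) v ≤ 1 := by
  classical
  rw [Set.indicator_apply]; split_ifs <;> norm_num

lemma PiAbs_nonneg (d : ℕ) (v : Fin d → ℝ) : 0 ≤ PiAbs d v :=
  Finset.prod_nonneg fun j _ => abs_nonneg _

lemma DeltaV_nonneg (d : ℕ) (v : Fin d → ℝ) : 0 ≤ DeltaV d v :=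
  Finset.prod_nonneg fun h _ => Finset.prod_nonneg fun k _ => by
    split <;> [exact abs_nonneg _; norm_num]

lemma fGOI_nonneg (d : ℕ) (c : ℝ) (lam : Fin d → ℝ) : 0 ≤ fGOI d c lam := by
  unfold fGOI
  apply mul_nonneg
  apply mul_nonneg
  apply mul_nonneg
  · exact inv_nonneg.mpr (mul_nonneg (Kd_nonneg d) (Real.sqrt_nonneg _))
  · exact DeltaV_nonneg d lam
  · exact (Real.exp_pos _).le
  · exact ind_nonneg _

lemma Gfun_nonneg (d i : ℕ) (c s : ℝ) (lam : Fin d → ℝ) : 0 ≤ Gfun d i c s lam := by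
  unfold Gfun
  exact mul_nonneg (mul_nonneg (PiAbs_nonneg _ _) (ind_nonneg _)) (fGOI_nonneg _ _ _)

lemma Gfun_le (d i : ℕ) (s : ℝ) (lam : Fin d → ℝ) :
    Gfun d i (1/2) s lam ≤ C0 d * ((1 + |s|) ^ d * ∏ j, wfun d (lam j)) := by
  set P : ℝ := ∏ j, (1 + |lam j|) with hPdef
  set Q : ℝ := ∏ j, Real.exp (-((2 + (d:ℝ))⁻¹ * lam j ^ 2)) with hQdef
  have hprodge1 : ∀ t : Finset (Fin d), (1:ℝ) ≤ ∏ k ∈ t, (1 + |lam k|) := by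
    intro t
    calc (1:ℝ) = ∏ _k ∈ t, 1 := by simp
      _ ≤ ∏ k ∈ t, (1 + |lam k|) :=
        Finset.prod_le_prod (fun _ _ => zero_le_one)
          (fun k _ => by have := abs_nonneg (lam k); linarith)
  have hP1 : 1 ≤ P := by rw [hPdef]; exact hprodge1 _
  have hPle : ∀ j : Fin d, 1 + |lam j| ≤ P := by
    intro j
    rw [hPdef, ← Finset.mul_prod_erase Finset.univ _ (Finset.mem_univ j)]
    exact le_mul_of_one_le_right (by positivity) (hprodge1 _)
  have hQ0 : 0 ≤ Q := Finset.prod_nonneg fun j _ => (Real.exp_pos _).le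
  -- bound on PiAbs of shift
  have hA : PiAbs d (fun j => lam j - s) ≤ (1 + |s|) ^ d * P := by
    have : PiAbs d (fun j => lam j - s) ≤ ∏ j, (1 + |s|) * (1 + |lam j|) := by
      apply Finset.prod_le_prod (fun j _ => abs_nonneg _)
      intro j _
      have h1 : |lam j - s| ≤ |lam j| + |s| := by
        calc |lam j - s| = |lam j + -s| := by rw [sub_eq_add_neg]
          _ ≤ |lam j| + |-s| := abs_add_le _ _
          _ = |lam j| + |s| := by rw [abs_neg]
      nlinarith [abs_nonneg (lam j), abs_nonneg s]
    calc PiAbs d (fun j => lam j - s) ≤ ∏ j, (1 + |s|) * (1 + |lam j|) := this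
      _ = (1 + |s|) ^ d * P := by
          rw [Finset.prod_mul_distrib, Finset.prod_const, Finset.card_univ, Fintype.card_fin]
  -- bound on DeltaV
  have hD : DeltaV d lam ≤ ((P ^ 2) ^ d) ^ d := by
    have hfac : ∀ h k : Fin d, (if h < k then |lam h - lam k| else 1) ≤ P ^ 2 := by
      intro h k
      split
      · have h1 : |lam h - lam k| ≤ |lam h| + |lam k| := by
          calc |lam h - lam k| = |lam h + -lam k| := by rw [sub_eq_add_neg]
            _ ≤ |lam h| + |-lam k| := abs_add_le _ _
            _ = |lam h| + |lam k| := by rw [abs_neg]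
        have h2 : |lam h| + |lam k| ≤ (1 + |lam h|) * (1 + |lam k|) := by
          nlinarith [abs_nonneg (lam h), abs_nonneg (lam k)]
        have h3 : (1 + |lam h|) * (1 + |lam k|) ≤ P * P :=
          mul_le_mul (hPle h) (hPle k) (by positivity) (by linarith)
        calc |lam h - lam k| ≤ P * P := by linarith
          _ = P ^ 2 := (sq P).symm
      · nlinarith
    calc DeltaV d lam ≤ ∏ _h : Fin d, ∏ _k : Fin d, P ^ 2 := by
          apply Finset.prod_le_prod
          · intro h _
            exact Finset.prod_nonneg fun k _ => by split <;> [exact abs_nonneg _; norm_num]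
          · intro h _
            exact Finset.prod_le_prod (fun k _ => by split <;> [exact abs_nonneg _; norm_num])
              (fun k _ => hfac h k)
      _ = ((P ^ 2) ^ d) ^ d := by
          simp [Finset.prod_const, Finset.card_univ]
  -- bound on exponential
  have hE : Real.exp (-(∑ j, lam j ^ 2) / 2 +
      (1/2) * (∑ j, lam j) ^ 2 / (2 * (1 + (d:ℝ) * (1/2)))) ≤ Q := by
    set S : ℝ := ∑ j, lam j ^ 2 with hSdef
    set T : ℝ := (∑ j, lam j) ^ 2 with hTdef
    have hS0 : 0 ≤ S := Finset.sum_nonneg fun j _ => sq_nonneg _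
    have hCS : T ≤ (d:ℝ) * S := by
      have := sq_sum_le_card_mul_sum_sq (s := (Finset.univ : Finset (Fin d))) (f := lam)
      simpa [Finset.card_univ] using this
    have hc2 : (0:ℝ) < 2 + d := by positivity
    have key : -S / 2 + (1/2) * T / (2 * (1 + (d:ℝ) * (1/2))) ≤
        ∑ j, -((2 + (d:ℝ))⁻¹ * lam j ^ 2) := by
      have hsum : ∑ j, -((2 + (d:ℝ))⁻¹ * lam j ^ 2) = -((2 + (d:ℝ))⁻¹ * S) := by
        simp [hSdef, Finset.mul_sum]
      rw [hsum]
      have hrw : 2 * (1 + (d:ℝ) * (1/2)) = 2 + d := by ring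
      rw [hrw]
      have h1 : (1/2) * T / (2 + (d:ℝ)) ≤ ((d:ℝ) * S) / (2 * (2 + (d:ℝ))) := by
        rw [div_le_div_iff₀ hc2 (by positivity)]
        nlinarith
      have h2 : -S / 2 + ((d:ℝ) * S) / (2 * (2 + (d:ℝ))) = -((2 + (d:ℝ))⁻¹ * S) := by
        field_simp
        ring
      linarith
    calc Real.exp _ ≤ Real.exp (∑ j, -((2 + (d:ℝ))⁻¹ * lam j ^ 2)) := Real.exp_le_exp.mpr key
      _ = Q := by rw [Real.exp_sum]
  -- assembly
  have hw : ∏ j, wfun d (lam j) = P ^ (2*d*d+1) * Q := by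
    unfold wfun
    rw [Finset.prod_mul_distrib, Finset.prod_pow]
  have hPP : ((P ^ 2) ^ d) ^ d * P = P ^ (2*d*d+1) := by
    rw [← pow_mul, ← pow_mul, ← pow_succ]
    congr 1
    ring
  have hC0 : 0 ≤ C0 d := C0_nonneg d
  have hF : fGOI d (1/2) lam ≤ C0 d * ((P ^ 2) ^ d) ^ d * Q * 1 := by
    unfold fGOI
    apply mul_le_mul _ (ind_le_one _) (ind_nonneg _) (by positivity)
    apply mul_le_mul _ hE (Real.exp_pos _).le (by positivity)
    apply mul_le_mul_of_nonneg_left hD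
    exact hC0
  calc Gfun d i (1/2) s lam
      ≤ ((1 + |s|) ^ d * P) * 1 * (C0 d * ((P ^ 2) ^ d) ^ d * Q * 1) := by
        unfold Gfun
        apply mul_le_mul _ hF (fGOI_nonneg _ _ _) (by positivity)
        apply mul_le_mul hA (ind_le_one _) (ind_nonneg _) (by positivity)
    _ = C0 d * ((1 + |s|) ^ d * ∏ j, wfun d (lam j)) := by
        rw [hw, ← hPP]
        ring

lemma measurableSet_mono (d : ℕ) : MeasurableSet {x : Fin d → ℝ | Monotone x} := by
  have h : {x : Fin d → ℝ | Monotone x} =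
      ⋂ p : Fin d × Fin d, {x : Fin d → ℝ | p.1 ≤ p.2 → x p.1 ≤ x p.2} := by
    ext x
    simp only [Set.mem_setOf_eq, Set.mem_iInter, Prod.forall]
    constructor
    · intro hx a b hab
      exact hx hab
    · intro hx a b hab
      exact hx a b hab
  rw [h]
  apply MeasurableSet.iInter
  intro p
  by_cases hp : p.1 ≤ p.2
  · have h2 : {x : Fin d → ℝ | p.1 ≤ p.2 → x p.1 ≤ x p.2} = {x | x p.1 ≤ x p.2} := by
      ext x; simp [hp]
    rw [h2]
    exact measurableSet_le (measurable_pi_apply _) (measurable_pi_apply _)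
  · have h2 : {x : Fin d → ℝ | p.1 ≤ p.2 → x p.1 ≤ x p.2} = Set.univ := by
      ext x; simp [hp]
    rw [h2]
    exact MeasurableSet.univ

lemma measurableSet_Oi (d i : ℕ) : MeasurableSet (Oi d i) := by
  have h : Oi d i = (⋂ j : Fin d, {lam : Fin d → ℝ | (j:ℕ) + 1 = i → lam j < 0}) ∩
      ⋂ j : Fin d, {lam : Fin d → ℝ | (j:ℕ) = i → 0 < lam j} := by
    ext lam
    simp only [Oi, Set.mem_setOf_eq, Set.mem_inter_iff, Set.mem_iInter]
  rw [h]
  apply MeasurableSet.inter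
  · apply MeasurableSet.iInter
    intro j
    by_cases hj : (j:ℕ) + 1 = i
    · have h2 : {lam : Fin d → ℝ | (j:ℕ) + 1 = i → lam j < 0} = {lam | lam j < 0} := by
        ext lam; simp [hj]
      rw [h2]
      exact measurableSet_lt (measurable_pi_apply _) measurable_const
    · have h2 : {lam : Fin d → ℝ | (j:ℕ) + 1 = i → lam j < 0} = Set.univ := by
        ext lam; simp [hj]
      rw [h2]; exact MeasurableSet.univ
  · apply MeasurableSet.iInter
    intro j
    by_cases hj : (j:ℕ) = i
    · have h2 : {lam : Fin d → ℝ | (j:ℕ) = i → 0 < lam j} = {lam | 0 < lam j} := by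
        ext lam; simp [hj]
      rw [h2]
      exact measurableSet_lt measurable_const (measurable_pi_apply _)
    · have h2 : {lam : Fin d → ℝ | (j:ℕ) = i → 0 < lam j} = Set.univ := by
        ext lam; simp [hj]
      rw [h2]; exact MeasurableSet.univ

lemma continuous_DeltaV (d : ℕ) : Continuous (DeltaV d) := by
  unfold DeltaV
  apply continuous_finset_prod
  intro h _
  apply continuous_finset_prod
  intro k _
  by_cases hk : h < k
  · simp only [hk, if_true]
    exact ((continuous_apply h).sub (continuous_apply k)).abs
  · simp only [hk, if_false]
    exact continuous_const

lemma continuous_PiAbs (d : ℕ) : Continuous (PiAbs d) := by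
  unfold PiAbs
  exact continuous_finset_prod _ fun j _ => (continuous_apply j).abs

lemma measurable_fGOI (d : ℕ) (c : ℝ) : Measurable (fGOI d c) := by
  have hsum1 : Continuous fun lam : Fin d → ℝ => ∑ j, lam j ^ 2 :=
    continuous_finset_sum _ fun j _ => (continuous_apply j).pow 2
  have hsum2 : Continuous fun lam : Fin d → ℝ => ∑ j, lam j :=
    continuous_finset_sum _ fun j _ => continuous_apply j
  have hexp : Continuous fun lam : Fin d → ℝ =>
      Real.exp (-(∑ j, lam j ^ 2) / 2 + c * (∑ j, lam j) ^ 2 / (2 * (1 + d * c))) :=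
    Real.continuous_exp.comp ((hsum1.neg.div_const 2).add
      ((continuous_const.mul (hsum2.pow 2)).div_const _))
  unfold fGOI
  exact (((continuous_const.mul (continuous_DeltaV d)).mul hexp).measurable).mul
    (Measurable.indicator measurable_const (measurableSet_mono d))

lemma measurable_G (d i : ℕ) (c : ℝ) :
    Measurable (fun p : ℝ × (Fin d → ℝ) => Gfun d i c p.1 p.2) := by
  have hshift : Continuous fun p : ℝ × (Fin d → ℝ) => (fun j => p.2 j - p.1) :=
    continuous_pi fun j => ((continuous_apply j).comp continuous_snd).sub continuous_fst
  unfold Gfun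
  exact ((((continuous_PiAbs d).comp hshift).measurable).mul
    ((Measurable.indicator measurable_const (measurableSet_Oi d i)).comp hshift.measurable)).mul
    ((measurable_fGOI d c).comp measurable_snd)

lemma Wd_int (d : ℕ) : Integrable (fun lam : Fin d → ℝ => ∏ j, wfun d (lam j)) :=
  Integrable.fintype_prod (fun _ => wfun_int d)

set_option maxHeartbeats 1000000 in
lemma Gfun_integrable (d i : ℕ) (s : ℝ) : Integrable (Gfun d i (1/2) s) := by
  have hmeas : Measurable (Gfun d i (1/2) s) :=
    (measurable_G d i (1/2)).comp (measurable_const.prodMk measurable_id)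
  refine (((Wd_int d).const_mul ((1 + |s|) ^ d)).const_mul (C0 d)).mono'
    hmeas.aestronglyMeasurable ?_
  filter_upwards with lam
  rw [Real.norm_eq_abs, abs_of_nonneg (Gfun_nonneg d i (1/2) s lam)]
  exact Gfun_le d i s lam

lemma meas_inner (d i : ℕ) (c : ℝ) :
    StronglyMeasurable fun s : ℝ => ∫ lam : Fin d → ℝ, Gfun d i c s lam :=
  StronglyMeasurable.integral_prod_right' ((measurable_G d i c).stronglyMeasurable)

lemma ae_ne_zero (d : ℕ) : ∀ᵐ lam : Fin d → ℝ, ∀ j, lam j ≠ 0 := by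
  rw [ae_all_iff]
  intro j
  rw [ae_iff]
  have h : {lam : Fin d → ℝ | ¬lam j ≠ 0} = {lam : Fin d → ℝ | lam j = 0} := by
    ext lam; simp
  rw [h, MeasureTheory.volume_pi]
  exact MeasureTheory.Measure.pi_hyperplane _ j 0

lemma shift_mem_iff (d i : ℕ) {lam : Fin d → ℝ} {m : ℝ}
    (hmle : ∀ j, m ≤ |lam j|) {t : ℝ} (ht : |t| < m) :
    ((fun j => lam j - t) ∈ Oi d i) ↔ lam ∈ Oi d i := by
  have h1 : ∀ j : Fin d, (lam j - t < 0 ↔ lam j < 0) := by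
    intro j
    have h := lt_of_lt_of_le ht (hmle j)
    have h2 := abs_lt.mp h
    rcases abs_cases (lam j) with ⟨he, hp⟩ | ⟨he, hp⟩ <;>
      constructor <;> intro hh <;> rw [he] at h2 <;> linarith
  have h2 : ∀ j : Fin d, (0 < lam j - t ↔ 0 < lam j) := by
    intro j
    have h := lt_of_lt_of_le ht (hmle j)
    have h2 := abs_lt.mp h
    rcases abs_cases (lam j) with ⟨he, hp⟩ | ⟨he, hp⟩ <;>
      constructor <;> intro hh <;> rw [he] at h2 <;> linarith
  unfold Oi
  simp only [Set.mem_setOf_eq]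
  exact and_congr
    (forall_congr' fun j => imp_congr_right fun _ => h1 j)
    (forall_congr' fun j => imp_congr_right fun _ => h2 j)

lemma inner_tendsto (d i : ℕ) (hd : 0 < d) {B : ℝ} (s : ℕ → ℝ)
    (hs : Tendsto s atTop (nhds 0)) (hB : ∀ n, |s n| ≤ B) :
    Tendsto (fun n => ∫ lam : Fin d → ℝ, Gfun d i (1/2) (s n) lam) atTop
      (nhds (∫ lam : Fin d → ℝ, Gfun d i (1/2) 0 lam)) := by
  apply tendsto_integral_of_dominated_convergence
    (bound := fun lam : Fin d → ℝ => C0 d * ((1 + B) ^ d * ∏ j, wfun d (lam j)))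
  · intro n
    exact ((measurable_G d i (1/2)).comp
      (measurable_const.prodMk measurable_id)).aestronglyMeasurable
  · exact (((Wd_int d).const_mul ((1 + B) ^ d)).const_mul (C0 d))
  · intro n
    filter_upwards with lam
    rw [Real.norm_eq_abs, abs_of_nonneg (Gfun_nonneg d i (1/2) (s n) lam)]
    refine (Gfun_le d i (s n) lam).trans ?_
    have hB0 : 0 ≤ B := le_trans (abs_nonneg _) (hB 0)
    have hW : 0 ≤ ∏ j, wfun d (lam j) := Finset.prod_nonneg fun j _ => wfun_nonneg d _
    have h1 : (1 + |s n|) ^ d ≤ (1 + B) ^ d := by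
      apply pow_le_pow_left₀ (by positivity)
      have := hB n; linarith
    have := mul_le_mul_of_nonneg_right h1 hW
    have := mul_le_mul_of_nonneg_left this (C0_nonneg d)
    linarith
  · filter_upwards [ae_ne_zero d] with lam hlam
    have hne : Nonempty (Fin d) := ⟨⟨0, hd⟩⟩
    set m : ℝ := Finset.univ.inf' Finset.univ_nonempty (fun j => |lam j|) with hmdef
    have hmle : ∀ j : Fin d, m ≤ |lam j| := fun j =>
      Finset.inf'_le _ (Finset.mem_univ j)
    have hm : 0 < m := by
      rw [hmdef, Finset.lt_inf'_iff]
      intro j _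
      exact abs_pos.mpr (hlam j)
    have hev : ∀ᶠ n in atTop, |s n| < m := by
      have h := Metric.tendsto_nhds.mp hs m hm
      filter_upwards [h] with n hn
      simpa [Real.dist_eq] using hn
    have hcont : Continuous fun t : ℝ => PiAbs d (fun j => lam j - t) :=
      (continuous_PiAbs d).comp (continuous_pi fun j => continuous_const.sub continuous_id)
    have htendA : Tendsto (fun n => PiAbs d (fun j => lam j - s n)) atTop
        (nhds (PiAbs d (fun j => lam j - 0))) := (hcont.tendsto 0).comp hs
    have htend : Tendsto (fun n => PiAbs d (fun j => lam j - s n) *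
        Set.indicator (Oi d i) (fun _ => (1:ℝ)) (fun j => lam j - 0) * fGOI d (1/2) lam)
        atTop (nhds (Gfun d i (1/2) 0 lam)) := by
      unfold Gfun
      exact (htendA.mul_const _).mul_const _
    refine Tendsto.congr' ?_ htend
    filter_upwards [hev] with n hn
    unfold Gfun
    congr 2
    classical
    rw [Set.indicator_apply, Set.indicator_apply]
    exact if_congr ((shift_mem_iff d i hmle (t := 0) (by simp [hm])).trans
      (shift_mem_iff d i hmle hn).symm) rfl rfl


lemma stdPhi_eq : stdPhi = fun x => Real.exp (-(2⁻¹ * x ^ 2)) * (Real.sqrt (2 * π))⁻¹ := by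
  funext x
  unfold stdPhi
  rw [div_eq_mul_inv]
  congr 2
  ring

lemma stdPhi_nonneg (x : ℝ) : 0 ≤ stdPhi x := by
  unfold stdPhi; positivity

lemma continuous_stdPhi : Continuous stdPhi := by
  unfold stdPhi
  exact (Real.continuous_exp.comp ((continuous_pow 2).neg.div_const 2)).div_const _

lemma stdPhi_int : Integrable stdPhi := by
  rw [stdPhi_eq]
  have h := integrable_exp_neg_mul_sq (b := 2⁻¹) (by norm_num)
  simp only [neg_mul] at h
  exact h.mul_const _

lemma stdPhi_total : ∫ x : ℝ, stdPhi x = 1 := by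
  rw [stdPhi_eq]
  rw [MeasureTheory.integral_mul_const]
  have h := integral_gaussian (2⁻¹ : ℝ)
  simp only [neg_mul] at h
  rw [h]
  have h2 : π / 2⁻¹ = 2 * π := by ring
  rw [h2]
  exact mul_inv_cancel₀ (by positivity)

lemma Ioi_stdPhi (u : ℝ) : ∫ x in Set.Ioi u, stdPhi x = 1 - stdCDF u := by
  have h := intervalIntegral.integral_Iic_add_Ioi (b := u) (f := stdPhi) (μ := volume)
    stdPhi_int.integrableOn stdPhi_int.integrableOn
  unfold stdCDF
  rw [stdPhi_total] at h
  linarith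

lemma IW_nonneg (d : ℕ) : 0 ≤ ∫ lam : Fin d → ℝ, ∏ j, wfun d (lam j) :=
  integral_nonneg fun lam => Finset.prod_nonneg fun j _ => wfun_nonneg d _

lemma inner_le (d i : ℕ) (s : ℝ) :
    ‖∫ lam : Fin d → ℝ, Gfun d i (1/2) s lam‖ ≤
      C0 d * ((1 + |s|) ^ d * ∫ lam : Fin d → ℝ, ∏ j, wfun d (lam j)) := by
  have h := norm_integral_le_of_norm_le
    (f := Gfun d i (1/2) s)
    (g := fun lam => C0 d * ((1 + |s|) ^ d * ∏ j, wfun d (lam j)))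
    (by
      have := ((Wd_int d).const_mul ((1 + |s|) ^ d)).const_mul (C0 d)
      exact this)
    (by
      filter_upwards with lam
      rw [Real.norm_eq_abs, abs_of_nonneg (Gfun_nonneg d i (1/2) s lam)]
      exact Gfun_le d i s lam)
  rwa [integral_const_mul, integral_const_mul] at h

lemma outer_tendsto (d i : ℕ) (hd : 0 < d) (u : ℝ) {B : ℝ} (ξ : ℕ → ℝ)
    (hξ : Tendsto ξ atTop (nhds 0)) (hB : ∀ n, |ξ n| ≤ B) :
    Tendsto (fun n => GOIintShift d i (1/2) (ξ n) u) atTop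
      (nhds ((1 - stdCDF u) * ∫ lam : Fin d → ℝ, Gfun d i (1/2) 0 lam)) := by
  have hB0 : 0 ≤ B := le_trans (abs_nonneg _) (hB 0)
  set IW : ℝ := ∫ lam : Fin d → ℝ, ∏ j, wfun d (lam j) with hIW
  set cinf : ℝ := ∫ lam : Fin d → ℝ, Gfun d i (1/2) 0 lam with hcinf
  have hsabs : ∀ (n : ℕ) (x : ℝ), |ξ n * x / Real.sqrt 2| ≤ B * |x| := by
    intro n x
    have h12 : (1:ℝ) ≤ Real.sqrt 2 := by
      rw [show (1:ℝ) = Real.sqrt 1 from (Real.sqrt_one).symm]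
      exact Real.sqrt_le_sqrt (by norm_num)
    calc |ξ n * x / Real.sqrt 2| = |ξ n| * |x| / Real.sqrt 2 := by
          rw [abs_div, abs_mul, abs_of_nonneg (Real.sqrt_nonneg 2)]
      _ ≤ |ξ n| * |x| := div_le_self (by positivity) h12
      _ ≤ B * |x| := mul_le_mul_of_nonneg_right (hB n) (abs_nonneg x)
  have key : Tendsto (fun n => ∫ x in Set.Ioi u, stdPhi x *
      ∫ lam : Fin d → ℝ, Gfun d i (1/2) (ξ n * x / Real.sqrt 2) lam) atTop
      (nhds (∫ x in Set.Ioi u, stdPhi x * cinf)) := by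
    apply tendsto_integral_of_dominated_convergence
      (bound := fun x => stdPhi x * (C0 d * ((1 + B * |x|) ^ d * IW)))
    · intro n
      apply Measurable.aestronglyMeasurable
      apply continuous_stdPhi.measurable.mul
      exact (meas_inner d i (1/2)).measurable.comp
        ((measurable_id.const_mul (ξ n)).div_const _)
    · apply Integrable.restrict
      have h1 : Integrable (fun x : ℝ => (1 + B * |x|) ^ d * Real.exp (-(2⁻¹ * x ^ 2))) := by
        have := intpolygauss d (b := 2⁻¹) (B := B) (by norm_num) hB0
        simpa [neg_mul] using this
      have h2 := (h1.const_mul ((Real.sqrt (2 * π))⁻¹ * (C0 d * IW)))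
      refine h2.congr ?_
      filter_upwards with x
      rw [stdPhi_eq]
      ring
    · intro n
      filter_upwards with x
      rw [Real.norm_eq_abs, abs_mul, abs_of_nonneg (stdPhi_nonneg x)]
      apply mul_le_mul_of_nonneg_left _ (stdPhi_nonneg x)
      refine le_trans (inner_le d i _) ?_
      have h1 : (1 + |ξ n * x / Real.sqrt 2|) ^ d ≤ (1 + B * |x|) ^ d := by
        apply pow_le_pow_left₀ (by positivity)
        have := hsabs n x; linarith
      have h2 := mul_le_mul_of_nonneg_right h1 (IW_nonneg d)
      have h3 := mul_le_mul_of_nonneg_left h2 (C0_nonneg d)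
      exact h3
    · filter_upwards with x
      have hs' : Tendsto (fun n => ξ n * x / Real.sqrt 2) atTop (nhds 0) := by
        have := hξ.mul_const (x / Real.sqrt 2)
        simp only [zero_mul] at this
        refine this.congr fun n => by ring
      exact (inner_tendsto d i hd _ hs' (fun n => hsabs n x)).const_mul (stdPhi x)
  have hGS : (fun n => GOIintShift d i (1/2) (ξ n) u) = fun n => ∫ x in Set.Ioi u, stdPhi x *
      ∫ lam : Fin d → ℝ, Gfun d i (1/2) (ξ n * x / Real.sqrt 2) lam := rfl
  rw [hGS]
  have hval : ∫ x in Set.Ioi u, stdPhi x * cinf = (1 - stdCDF u) * cinf := by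
    rw [MeasureTheory.integral_mul_const, Ioi_stdPhi]
  rwa [hval] at key

lemma GOIint_eq (d i : ℕ) :
    (∫ lam : Fin d → ℝ, Gfun d i (1/2) 0 lam) = GOIint d i (1/2) := by
  unfold GOIint Gfun
  simp only [sub_zero]

/-- Sparse regime of Theorem 3.3: if `κ'(1) = 1` then `L^{−d/2}·N_i(L,u)` converges to
`η_1^{−d/2}·A_i·(1−Φ(u))`. -/
theorem statement4 (d i : ℕ) (hd : 2 ≤ d) (hi : i ≤ d) (u : ℝ) (κ : ℝ → ℝ)
    (hsmooth : ContDiff ℝ 2 κ) (hfix : κ 1 = 1)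
    (hpos1 : 0 < deriv κ 1) (hpos2 : 0 < deriv (deriv κ) 1)
    (hjensen : deriv κ 1 * (deriv κ 1 - 1) ≤ deriv (deriv κ) 1)
    (hsparse : deriv κ 1 = 1) :
    Tendsto (fun L : ℕ => (L : ℝ) ^ (-(d : ℝ) / 2) * Ncrit d i κ u L) atTop
      (nhds ((deriv κ 1 / deriv (deriv κ) 1) ^ (-(d : ℝ) / 2) *
        (2 * Real.sqrt π / Real.Gamma (((d : ℝ) + 1) / 2) * GOIint d i (1 / 2)) *
        (1 - stdCDF u))) := by
  have hd0 : 0 < d := lt_of_lt_of_le (by norm_num) hd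
  set D2 : ℝ := deriv (deriv κ) 1 with hD2
  set e : ℝ := -(d:ℝ)/2 with he
  have hval : ∀ n : ℕ, etaL κ n = ((n:ℝ) * D2)⁻¹ := by
    intro n
    unfold etaL
    rw [iter_d1 hsmooth hfix hsparse n, iter_d2 hsmooth hfix hsparse n, one_div]
  have hval2 : ∀ n : ℕ, xiL κ n = ((n:ℝ) * D2)⁻¹ := by
    intro n
    unfold xiL
    rw [iter_d1 hsmooth hfix hsparse n, iter_d2 hsmooth hfix hsparse n]
    norm_num [hD2]
  have hxi_nonneg : ∀ n : ℕ, 0 ≤ ((n:ℝ) * D2)⁻¹ := fun n => by positivity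
  have hB : ∀ n : ℕ, |xiL κ n| ≤ D2⁻¹ := by
    intro n
    rw [hval2 n, abs_of_nonneg (hxi_nonneg n)]
    cases n with
    | zero => simp; positivity
    | succ k =>
      apply inv_anti₀ hpos2
      have h1 : (1:ℝ) ≤ ((k+1 : ℕ):ℝ) := by
        exact_mod_cast Nat.one_le_iff_ne_zero.mpr (Nat.succ_ne_zero k)
      nlinarith
  have hxi : Tendsto (fun n : ℕ => xiL κ n) atTop (nhds 0) := by
    have h0 : (fun n : ℕ => xiL κ n) = fun n : ℕ => D2⁻¹ * (1/(n:ℝ)) := by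
      funext n; rw [hval2 n, mul_inv]; ring
    rw [h0]
    have := tendsto_one_div_atTop_nhds_zero_nat.const_mul D2⁻¹
    simpa using this
  have hTT := outer_tendsto d i hd0 u _ hxi hB
  rw [GOIint_eq] at hTT
  set C : ℝ := 2 * Real.sqrt π / Real.Gamma (((d:ℝ)+1)/2) with hC
  have harg : ∀ n : ℕ, (1 + etaL κ n - xiL κ n)/2 = 1/2 := fun n => by
    rw [hval n, hval2 n]; ring
  have h1 : ∀ n : ℕ, 1 ≤ n → (n:ℝ)^e * Ncrit d i κ u n =
      (D2⁻¹)^e * (C * GOIintShift d i (1/2) (xiL κ n) u) := by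
    intro n hn
    unfold Ncrit
    rw [harg n, hval n]
    have hn0 : (0:ℝ) < n := by exact_mod_cast hn
    have hmul : (n:ℝ)^e * (((n:ℝ)*D2)⁻¹)^e = (D2⁻¹)^e := by
      rw [← Real.mul_rpow (le_of_lt hn0) (hxi_nonneg n)]
      congr 1
      field_simp
    calc (n:ℝ)^e * (C * ((n:ℝ)*D2)⁻¹^e * GOIintShift d i (1/2) (xiL κ n) u)
        = ((n:ℝ)^e * (((n:ℝ)*D2)⁻¹)^e) * (C * GOIintShift d i (1/2) (xiL κ n) u) := by
          ring
      _ = (D2⁻¹)^e * (C * GOIintShift d i (1/2) (xiL κ n) u) := by rw [hmul]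
  have htend2 : Tendsto (fun n : ℕ => (D2⁻¹)^e * (C * GOIintShift d i (1/2) (xiL κ n) u)) atTop
      (nhds ((D2⁻¹)^e * (C * ((1 - stdCDF u) * GOIint d i (1/2))))) :=
    (hTT.const_mul C).const_mul _
  have heq : (D2⁻¹)^e * (C * ((1 - stdCDF u) * GOIint d i (1/2)))
      = (deriv κ 1 / D2)^e * (C * GOIint d i (1/2)) * (1 - stdCDF u) := by
    rw [hsparse, one_div]
    ring
  rw [heq] at htend2
  refine Tendsto.congr' ?_ htend2
  rw [Filter.EventuallyEq, eventually_atTop]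
  exact ⟨1, fun n hn => (h1 n hn).symm⟩
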